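/- Under the hypotheses of the continuous dependence theorem (A1, A2, h(0,u) ≠ 0, λ > ‖A‖/a fixed, uₖ → ū, A xₖ = λ h(xₖ,uₖ)), the full sequence (xₖ) converges to x̄, where x̄ is the unique solution of A x̄ = λ h(x̄, ū). (Every convergent subsequence of the bounded sequence (xₖ) must converge to x̄ by uniqueness, hence xₖ → x̄.) -/

import Mathlib

open scoped InnerProductSpace
open Filter Topology

theorem stmt5 (n : ℕ) (M : Type*) [MetricSpace M]
    (A : Matrix (Fin n) (Fin n) ℝ) (hA : A.IsSymm)
    (hs : Fin n → ℝ → M → ℝ)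
    (hcont : ∀ k, Continuous fun p : ℝ × M => hs k p.1 p.2)
    (h : EuclideanSpace ℝ (Fin n) → M → EuclideanSpace ℝ (Fin n))
    (hdef : ∀ x u k, h x u k = hs k (x k) u)
    (γ ζ θ : ℝ) (hγ : 2 < γ) (hζ : 0 < ζ) (hθ : 0 < θ)
    (hA1 : ∀ (z : EuclideanSpace ℝ (Fin n)) (v : M), θ ≤ ‖z‖ →
      ζ * ‖z‖ ^ γ ≤ ⟪h z v, z⟫_ℝ)
    (a : ℝ) (ha : 0 < a)
    (hA2 : ∀ (k : Fin n) (z₁ z₂ : ℝ) (v : M),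
      a * |z₁ - z₂| ^ 2 ≤ (hs k z₁ v - hs k z₂ v) * (z₁ - z₂))
    (h0 : ∀ u : M, h 0 u ≠ 0)
    (lam : ℝ) (hlam : ‖Matrix.toEuclideanCLM (𝕜 := ℝ) A‖ / a < lam)
    (u : ℕ → M) (ub : M) (hu : Tendsto u atTop (𝓝 ub))
    (x : ℕ → EuclideanSpace ℝ (Fin n))
    (hx : ∀ k, Matrix.toEuclideanCLM (𝕜 := ℝ) A (x k) = lam • h (x k) (u k)) :
    ∃ xb : EuclideanSpace ℝ (Fin n),
      Matrix.toEuclideanCLM (𝕜 := ℝ) A xb = lam • h xb ub ∧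
      Tendsto x atTop (𝓝 xb) := by
  set T := Matrix.toEuclideanCLM (𝕜 := ℝ) A with hT
  have hlam0 : 0 < lam := lt_of_le_of_lt (div_nonneg (norm_nonneg T) ha.le) hlam
  have hc : 0 < lam * a - ‖T‖ := by
    have := (div_lt_iff₀ ha).mp hlam
    linarith
  set c := lam * a - ‖T‖ with hcdef
  -- joint continuity of h
  have hHcont : Continuous fun p : EuclideanSpace ℝ (Fin n) × M => h p.1 p.2 := by
    have : (fun p : EuclideanSpace ℝ (Fin n) × M => h p.1 p.2)
        = (WithLp.equiv 2 (Fin n → ℝ)).symm ∘ (fun p => fun i => hs i (p.1 i) p.2) := by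
      funext p
      apply PiLp.ext
      intro i
      exact hdef p.1 p.2 i
    rw [this]
    refine (PiLp.continuous_toLp 2 (fun _ : Fin n => ℝ)).comp ?_
    refine continuous_pi fun i => ?_
    exact (hcont i).comp
      ((((continuous_apply i).comp (PiLp.continuous_ofLp 2 (fun _ : Fin n => ℝ))).comp
        continuous_fst).prodMk continuous_snd)
  -- monotonicity in inner product form
  have mono : ∀ (z₁ z₂ : EuclideanSpace ℝ (Fin n)) (v : M),
      a * ‖z₁ - z₂‖ ^ 2 ≤ ⟪h z₁ v - h z₂ v, z₁ - z₂⟫_ℝ := by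
    intro z₁ z₂ v
    have e1 : ⟪h z₁ v - h z₂ v, z₁ - z₂⟫_ℝ
        = ∑ i, (hs i (z₁ i) v - hs i (z₂ i) v) * (z₁ i - z₂ i) := by
      rw [PiLp.inner_apply]
      refine Finset.sum_congr rfl fun i _ => ?_
      simp [RCLike.inner_apply, hdef]
      ring
    have e2 : a * ‖z₁ - z₂‖ ^ 2 = ∑ i, a * |z₁ i - z₂ i| ^ 2 := by
      rw [← Finset.mul_sum]
      congr 1
      rw [← real_inner_self_eq_norm_sq, PiLp.inner_apply]
      refine Finset.sum_congr rfl fun i _ => ?_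
      simp [RCLike.inner_apply, sq_abs, sq]
    rw [e1, e2]
    exact Finset.sum_le_sum fun i _ => hA2 i (z₁ i) (z₂ i) v
  -- key estimate
  have key : ∀ (k : ℕ) (z : EuclideanSpace ℝ (Fin n)),
      c * ‖x k - z‖ ≤ ‖T z - lam • h z (u k)‖ := by
    intro k z
    set d := x k - z with hd
    have h1 : lam * (a * ‖d‖ ^ 2) ≤ lam * ⟪h (x k) (u k) - h z (u k), d⟫_ℝ :=
      mul_le_mul_of_nonneg_left (mono _ _ _) hlam0.le
    have e1 : lam • (h (x k) (u k) - h z (u k)) = T d + (T z - lam • h z (u k)) := by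
      rw [smul_sub, ← hx k, hd, map_sub]
      abel
    have h2 : lam * ⟪h (x k) (u k) - h z (u k), d⟫_ℝ
        = ⟪T d, d⟫_ℝ + ⟪T z - lam • h z (u k), d⟫_ℝ := by
      rw [← real_inner_smul_left, e1, inner_add_left]
    have h3 : ⟪T d, d⟫_ℝ ≤ ‖T‖ * ‖d‖ ^ 2 := by
      calc ⟪T d, d⟫_ℝ ≤ ‖T d‖ * ‖d‖ := real_inner_le_norm _ _
        _ ≤ ‖T‖ * ‖d‖ * ‖d‖ := mul_le_mul_of_nonneg_right (T.le_opNorm d) (norm_nonneg d)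
        _ = ‖T‖ * ‖d‖ ^ 2 := by ring
    have h4 : ⟪T z - lam • h z (u k), d⟫_ℝ ≤ ‖T z - lam • h z (u k)‖ * ‖d‖ :=
      real_inner_le_norm _ _
    rcases (norm_nonneg d).eq_or_lt with hd0 | hd0
    · rw [← hd0, mul_zero]
      exact norm_nonneg _
    · nlinarith [h1, h2.le, h3, h4, hd0]
  -- boundedness
  have hbnd : ∀ k, ‖x k‖ ≤ (lam / c) * ‖h 0 (u k)‖ := by
    intro k
    have := key k 0
    rw [sub_zero, map_zero, zero_sub, norm_neg, norm_smul,
      Real.norm_eq_abs, abs_of_pos hlam0] at this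
    rw [div_mul_eq_mul_div, le_div_iff₀ hc, mul_comm]
    exact this
  have hnorm0 : Tendsto (fun k => ‖h 0 (u k)‖) atTop (𝓝 ‖h 0 ub‖) := by
    have : Tendsto (fun k => ((0 : EuclideanSpace ℝ (Fin n)), u k)) atTop
        (𝓝 ((0 : EuclideanSpace ℝ (Fin n)), ub)) := tendsto_const_nhds.prodMk_nhds hu
    exact ((hHcont.tendsto _).comp this).norm
  obtain ⟨B, hB⟩ := hnorm0.bddAbove_range
  have hxball : ∀ k, x k ∈ Metric.closedBall (0 : EuclideanSpace ℝ (Fin n)) (lam / c * B) := by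
    intro k
    rw [Metric.mem_closedBall, dist_zero_right]
    refine (hbnd k).trans ?_
    exact mul_le_mul_of_nonneg_left (hB ⟨k, rfl⟩) (div_nonneg hlam0.le hc.le)
  obtain ⟨xb, -, φ, hφmono, hφ⟩ :=
    (isCompact_closedBall (0 : EuclideanSpace ℝ (Fin n)) (lam / c * B)).tendsto_subseq hxball
  have huφ : Tendsto (u ∘ φ) atTop (𝓝 ub) := hu.comp hφmono.tendsto_atTop
  have hheq : T xb = lam • h xb ub := by
    have l1 : Tendsto (fun k => T (x (φ k))) atTop (𝓝 (T xb)) :=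
      (T.continuous.tendsto xb).comp hφ
    have l2 : Tendsto (fun k => lam • h (x (φ k)) (u (φ k))) atTop (𝓝 (lam • h xb ub)) := by
      refine Tendsto.const_smul ?_ lam
      exact (hHcont.tendsto (xb, ub)).comp (hφ.prodMk_nhds huφ)
    have : (fun k => T (x (φ k))) = fun k => lam • h (x (φ k)) (u (φ k)) := by
      funext k; exact hx (φ k)
    rw [this] at l1
    exact tendsto_nhds_unique l1 l2
  refine ⟨xb, hheq, ?_⟩
  rw [tendsto_iff_norm_sub_tendsto_zero]
  have hub : ∀ k, ‖x k - xb‖ ≤ (lam / c) * ‖h xb ub - h xb (u k)‖ := by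
    intro k
    have := key k xb
    rw [hheq, ← smul_sub, norm_smul, Real.norm_eq_abs, abs_of_pos hlam0] at this
    rw [div_mul_eq_mul_div, le_div_iff₀ hc, mul_comm]
    exact this
  have hz : Tendsto (fun k => (lam / c) * ‖h xb ub - h xb (u k)‖) atTop (𝓝 0) := by
    have l3 : Tendsto (fun k => h xb (u k)) atTop (𝓝 (h xb ub)) :=
      (hHcont.tendsto (xb, ub)).comp (tendsto_const_nhds.prodMk_nhds hu)
    have l5 : Tendsto (fun k => h xb ub - h xb (u k)) atTop (𝓝 (h xb ub - h xb ub)) :=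
      Tendsto.sub tendsto_const_nhds l3
    rw [sub_self] at l5
    have l4 : Tendsto (fun k => ‖h xb ub - h xb (u k)‖) atTop (𝓝 0) := by
      simpa using l5.norm
    simpa using l4.const_mul (lam / c)
  exact squeeze_zero (fun k => norm_nonneg _) hub hz
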